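/- Let k be a field of characteristic ≠ 2 and let X be a 3×3 matrix over k written in block form X = [[X₁, X₂],[X₃, X₄]] with X₁ a 2×2 block, X₄ a scalar, X₃ = (x, y) a row vector, X₂ a column vector, satisfying: (i) ᵗX₃X₃ + ᵗJX₁ + ᵗX₁J = 0 where J = [[0,1],[−1,0]]; (ii) ᵗX₂ = X₄·(y, −x); (iii) X² = 0; (iv) tr(X) = 0 and X₄² = 0. Then X₄ = 0 and X is uniquely determined by (x, y): writing X₁ = [[a,b],[c,d]], one has c = x²/2, b = −y²/2, a − d = −xy, a + d = 0, and the map (x,y) ↦ X is injective. In particular, the scheme of such matrices is isomorphic to affine 2-space over k. -/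
import Mathlib


open Matrix

/-- The conditions on the affine chart `₁U` of the local model `M^loc_{{1}}` for the
Picard surface (proof of Proposition 6.2, special fiber, i.e. `π₀ = 0`): a `3 × 3`
matrix `X` in block form `[[X₁, X₂],[X₃, X₄]]` (with `X₁` of size `2`, `X₃ = (x,y)`,
`X₄` scalar) satisfying the isotropy condition (i) `ᵗX₃X₃ + ᵗJX₁ + ᵗX₁J = 0`,
(ii) `ᵗX₂ = X₄·(y, −x)`, (iii) `X² = 0`, and (iv) `tr X = 0` and `X₄² = 0`. -/
def PicardChart (k : Type*) [Field k] (X : Matrix (Fin 3) (Fin 3) k) : Prop :=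
  Matrix.vecMulVec ![X 2 0, X 2 1] ![X 2 0, X 2 1] +
      ((Matrix.of ![![(0 : k), 1], ![-1, 0]])ᵀ * Matrix.of ![![X 0 0, X 0 1], ![X 1 0, X 1 1]] +
        (Matrix.of ![![X 0 0, X 0 1], ![X 1 0, X 1 1]])ᵀ * Matrix.of ![![(0 : k), 1], ![-1, 0]]) = 0 ∧
  X 0 2 = X 2 2 * X 2 1 ∧
  X 1 2 = -(X 2 2 * X 2 0) ∧
  X * X = 0 ∧
  Matrix.trace X = 0 ∧
  X 2 2 ^ 2 = 0

lemma picard_entries {k : Type*} [Field k] (X : Matrix (Fin 3) (Fin 3) k)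
    (hX : PicardChart k X) :
    X 2 2 = 0 ∧ X 0 2 = 0 ∧ X 1 2 = 0 ∧ 2 * X 1 0 = X 2 0 ^ 2 ∧
      2 * X 0 1 = -(X 2 1 ^ 2) ∧ X 0 0 - X 1 1 = -(X 2 0 * X 2 1) ∧ X 0 0 + X 1 1 = 0 := by
  obtain ⟨h1, h2, h3, h4, h5, h6⟩ := hX
  have h22 : X 2 2 = 0 := by
    have := sq_eq_zero_iff.mp h6; exact this
  rw [← Matrix.ext_iff] at h1
  have e00 := h1 0 0
  have e01 := h1 0 1
  have e11 := h1 1 1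
  simp [Matrix.vecMulVec_apply, Matrix.mul_apply, Fin.sum_univ_two, Matrix.add_apply, Matrix.transpose_apply, Matrix.vecHead, Matrix.vecTail, Matrix.cons_val_zero, Matrix.cons_val_one] at e00 e01 e11
  have htr : X 0 0 + X 1 1 = 0 := by
    rw [Matrix.trace_fin_three] at h5; rw [h22] at h5; linear_combination h5
  refine ⟨h22, by rw [h2, h22]; ring, by rw [h3, h22]; ring, by linear_combination -e00, by linear_combination e11, by linear_combination e01, htr⟩


/-- in the affine chart above one has `X₄ = 0`, the entries of `X₁` are
determined by `(x, y)` (namely `c = x²/2`, `b = −y²/2`, `a − d = −xy`, `a + d = 0`),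
the matrix is uniquely determined by `(x, y)`, and every `(x, y)` arises; so the chart
is isomorphic to affine `2`-space. -/
theorem stmt_8 (k : Type*) [Field k] (hchar : ringChar k ≠ 2) :
    (∀ X : Matrix (Fin 3) (Fin 3) k, PicardChart k X →
      (X 2 2 = 0 ∧ 2 * X 1 0 = X 2 0 ^ 2 ∧ 2 * X 0 1 = -(X 2 1 ^ 2) ∧
        X 0 0 - X 1 1 = -(X 2 0 * X 2 1) ∧ X 0 0 + X 1 1 = 0 ∧
        (∀ X' : Matrix (Fin 3) (Fin 3) k, PicardChart k X' →
          X' 2 0 = X 2 0 → X' 2 1 = X 2 1 → X' = X))) ∧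
    (∀ x y : k, ∃ X : Matrix (Fin 3) (Fin 3) k,
      PicardChart k X ∧ X 2 0 = x ∧ X 2 1 = y) := by
  have h2k : (2 : k) ≠ 0 := Ring.two_ne_zero hchar
  constructor
  · intro X hX
    obtain ⟨h22, h02, h12, hc, hb, had, hapd⟩ := picard_entries X hX
    refine ⟨h22, hc, hb, had, hapd, ?_⟩
    intro X' hX' hx hy
    obtain ⟨h22', h02', h12', hc', hb', had', hapd'⟩ := picard_entries X' hX'
    simp only [hx, hy] at hc' hb' had'
    ext i j
    fin_cases i <;> fin_cases j
    · show X' 0 0 = X 0 0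
      apply mul_left_cancel₀ h2k
      linear_combination had' + hapd' - had - hapd
    · show X' 0 1 = X 0 1
      exact mul_left_cancel₀ h2k (hb'.trans hb.symm)
    · show X' 0 2 = X 0 2
      rw [h02, h02']
    · show X' 1 0 = X 1 0
      exact mul_left_cancel₀ h2k (hc'.trans hc.symm)
    · show X' 1 1 = X 1 1
      apply mul_left_cancel₀ h2k
      linear_combination hapd' - had' - hapd + had
    · show X' 1 2 = X 1 2
      rw [h12, h12']
    · exact hx
    · exact hy
    · show X' 2 2 = X 2 2
      rw [h22, h22']
  · intro x y
    refine ⟨Matrix.of ![![-(x*y)/2, -(y^2)/2, 0], ![x^2/2, x*y/2, 0], ![x, y, 0]], ?_, rfl, rfl⟩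
    refine ⟨?_, by simp [Matrix.vecHead, Matrix.vecTail], by simp [Matrix.vecHead, Matrix.vecTail], ?_, ?_, by simp [Matrix.vecHead, Matrix.vecTail]⟩
    · ext i j
      fin_cases i <;> fin_cases j <;>
        · simp [Matrix.vecMulVec_apply, Matrix.mul_apply, Fin.sum_univ_two, Matrix.vecHead,
            Matrix.vecTail]
          try field_simp
          try ring
    · ext i j
      fin_cases i <;> fin_cases j <;>
        · simp [Matrix.mul_apply, Fin.sum_univ_three, Matrix.vecHead, Matrix.vecTail]
          try field_simp
          try ring
    · simp [Matrix.trace_fin_three, Matrix.vecHead, Matrix.vecTail]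
      try field_simp
      try ring
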